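/- arXiv:2507.10220 — 3 statements merged into one kernel-verified Lean document; each statement's English description precedes it below -/
import Mathlib

section
/- Let H be a Hilbert space and let K : H → H be a compact, self-adjoint, positive semidefinite operator. For any κ with 0 < κ < 1 and any ν > 0, the operator norm of (K + νI)^{-1} K^κ is at most κ^κ (1-κ)^{1-κ} ν^{-(1-κ)}. -/
lemma scalar_bound {κ ν : ℝ} (hκ0 : 0 < κ) (hκ1 : κ < 1) (hν : 0 < ν)
    {x : ℝ} (hx : 0 ≤ x) :
    (x + ν)⁻¹ * x ^ κ ≤ κ ^ κ * (1 - κ) ^ (1 - κ) * ν ^ (-(1 - κ)) := by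
  have h1κ : 0 < 1 - κ := by linarith
  have hc : 0 ≤ κ ^ κ * (1 - κ) ^ (1 - κ) * ν ^ (-(1 - κ)) := by positivity
  rcases eq_or_lt_of_le hx with h | hx0
  · rw [← h, Real.zero_rpow hκ0.ne', mul_zero]; exact hc
  · have hxν : 0 < x + ν := by linarith
    -- weighted AM-GM
    have hamgm : (x / κ) ^ κ * (ν / (1 - κ)) ^ (1 - κ) ≤ x + ν := by
      have h := Real.geom_mean_le_arith_mean2_weighted hκ0.le h1κ.le
        (div_nonneg hx hκ0.le) (div_nonneg hν.le h1κ.le) (by ring)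
      calc (x / κ) ^ κ * (ν / (1 - κ)) ^ (1 - κ)
          ≤ κ * (x / κ) + (1 - κ) * (ν / (1 - κ)) := h
        _ = x + ν := by field_simp
    have hD : 0 < (x / κ) ^ κ * (ν / (1 - κ)) ^ (1 - κ) :=
      mul_pos (Real.rpow_pos_of_pos (by positivity) _) (Real.rpow_pos_of_pos (by positivity) _)
    have key : x ^ κ / (x + ν) ≤ x ^ κ / ((x / κ) ^ κ * (ν / (1 - κ)) ^ (1 - κ)) :=
      div_le_div_of_nonneg_left (Real.rpow_nonneg hx κ) hD hamgm
    have heq : x ^ κ / ((x / κ) ^ κ * (ν / (1 - κ)) ^ (1 - κ))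
        = κ ^ κ * (1 - κ) ^ (1 - κ) * ν ^ (-(1 - κ)) := by
      rw [Real.div_rpow hx hκ0.le, Real.div_rpow hν.le h1κ.le, Real.rpow_neg hν.le]
      have hxκ : (0:ℝ) < x ^ κ := Real.rpow_pos_of_pos hx0 κ
      have hκκ : (0:ℝ) < κ ^ κ := Real.rpow_pos_of_pos hκ0 κ
      have h1κ1κ : (0:ℝ) < (1 - κ) ^ (1 - κ) := Real.rpow_pos_of_pos h1κ _
      have hν1κ : (0:ℝ) < ν ^ (1 - κ) := Real.rpow_pos_of_pos hν _
      field_simp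
    rw [inv_mul_eq_div]
    exact heq ▸ key

/-- Let `H` be a Hilbert space and `K : H → H` a compact, self-adjoint,
positive semidefinite operator. For `0 < κ < 1` and `ν > 0`, the operator norm of
`(K + νI)⁻¹ K^κ` is at most `κ^κ (1-κ)^(1-κ) ν^(-(1-κ))`. The inverse of `K + νI`
(which exists since `K ⪰ 0` and `ν > 0`) is represented by a two-sided inverse `B`,
and `K^κ` is defined via the continuous functional calculus. -/
theorem stmt0 {H : Type*} [NormedAddCommGroup H] [InnerProductSpace ℂ H] [CompleteSpace H]
    (K : H →L[ℂ] H) (hKc : IsCompactOperator K) (hKsa : IsSelfAdjoint K)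
    (hKpos : K.IsPositive)
    (κ ν : ℝ) (hκ0 : 0 < κ) (hκ1 : κ < 1) (hν : 0 < ν)
    (B : H →L[ℂ] H)
    (hB1 : (K + (ν : ℂ) • (1 : H →L[ℂ] H)) * B = 1)
    (hB2 : B * (K + (ν : ℂ) • (1 : H →L[ℂ] H)) = 1) :
    ‖B * cfc (fun x : ℝ => x ^ κ) K‖ ≤ κ ^ κ * (1 - κ) ^ (1 - κ) * ν ^ (-(1 - κ)) := by
  have hKnn : (0 : H →L[ℂ] H) ≤ K := (ContinuousLinearMap.nonneg_iff_isPositive K).mpr hKpos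
  have hspec : ∀ x ∈ spectrum ℝ K, 0 ≤ x := fun x hx => spectrum_nonneg_of_nonneg hKnn hx
  have hne : ∀ x ∈ spectrum ℝ K, x + ν ≠ 0 := fun x hx =>
    ne_of_gt (by have := hspec x hx; linarith)
  have hcont_inv : ContinuousOn (fun x : ℝ => (x + ν)⁻¹) (spectrum ℝ K) :=
    ContinuousOn.inv₀ (by fun_prop) hne
  have hcont_pow : ContinuousOn (fun x : ℝ => x ^ κ) (spectrum ℝ K) :=
    (Real.continuous_rpow_const hκ0.le).continuousOn
  have hA : K + (ν : ℂ) • (1 : H →L[ℂ] H) = cfc (fun x : ℝ => x + ν) K := by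
    rw [cfc_add_const ν _ K (by fun_prop) hKsa, cfc_id' ℝ K hKsa]
    congr 1
  have hBC : B = cfc (fun x : ℝ => (x + ν)⁻¹) K := by
    have h : (K + (ν : ℂ) • (1 : H →L[ℂ] H)) * cfc (fun x : ℝ => (x + ν)⁻¹) K = 1 := by
      rw [hA, ← cfc_mul _ _ K (by fun_prop) hcont_inv]
      rw [← cfc_one (R := ℝ) K hKsa]
      exact cfc_congr (fun x hx => mul_inv_cancel₀ (hne x hx))
    calc B = B * ((K + (ν : ℂ) • (1 : H →L[ℂ] H)) * cfc (fun x : ℝ => (x + ν)⁻¹) K) := by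
            rw [h, mul_one]
      _ = (B * (K + (ν : ℂ) • (1 : H →L[ℂ] H))) * cfc (fun x : ℝ => (x + ν)⁻¹) K := by
            rw [mul_assoc]
      _ = cfc (fun x : ℝ => (x + ν)⁻¹) K := by rw [hB2, one_mul]
  rw [hBC, ← cfc_mul _ _ K hcont_inv hcont_pow]
  apply norm_cfc_le (mul_nonneg (mul_nonneg (Real.rpow_nonneg hκ0.le _)
    (Real.rpow_nonneg (by linarith) _)) (Real.rpow_nonneg hν.le _))
  intro x hx
  have hx0 := hspec x hx
  rw [Real.norm_eq_abs, abs_of_nonneg (mul_nonneg (inv_nonneg.mpr (by linarith)) (Real.rpow_nonneg hx0 κ))]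
  exact scalar_bound hκ0 hκ1 hν hx0
end

section
/- Let ν > 0 and let K be a positive self-adjoint compact operator with trivial kernel on a Hilbert space H, with K + νI invertible. For μ ∈ H, define μ̄_ν := (K + νI)^{-1} K μ. Then μ − μ̄_ν = ν (K + νI)^{-1} μ, and consequently ‖μ − μ̄_ν‖ ≤ ‖μ‖ for all ν > 0; moreover if μ = K^κ δ with 0 < κ ≤ 1 and ‖δ‖² ≤ M, then ‖μ − μ̄_ν‖² ≤ M κ^{2κ}(1−κ)^{2(1−κ)} ν^{2κ}. -/
open scoped InnerProductSpace

/-- Pointwise bound: for `x ≥ 0`, `0 < κ ≤ 1`, `0 < ν`,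
`ν * x ^ κ / (x + ν) ≤ κ ^ κ * (1 - κ) ^ (1 - κ) * ν ^ κ`. -/
lemma pointwise_bound {κ ν x : ℝ} (hκ : 0 < κ) (hκ1 : κ ≤ 1) (hν : 0 < ν) (hx : 0 ≤ x) :
    ν * x ^ κ / (x + ν) ≤ κ ^ κ * (1 - κ) ^ (1 - κ) * ν ^ κ := by
  have hxν : 0 < x + ν := by linarith
  rcases eq_or_lt_of_le hκ1 with h1 | h1
  · subst h1
    simp only [Real.rpow_one, Real.one_rpow, sub_self, Real.rpow_zero, one_mul, mul_one]
    rw [div_le_iff₀ hxν]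
    nlinarith
  · -- κ < 1
    rcases eq_or_lt_of_le hx with hx0 | hx0
    · have h1κ : 0 ≤ 1 - κ := by linarith
      rw [← hx0, Real.zero_rpow hκ.ne', mul_zero, zero_div]
      positivity
    · have h1κ : 0 < 1 - κ := by linarith
      have amgm := Real.geom_mean_le_arith_mean2_weighted hκ.le h1κ.le
        (div_nonneg hx hκ.le) (div_nonneg hν.le h1κ.le) (by ring)
      have h2 : (x / κ) ^ κ = x ^ κ / κ ^ κ := Real.div_rpow hx hκ.le κ
      have h3 : (ν / (1 - κ)) ^ (1 - κ) = ν ^ (1 - κ) / (1 - κ) ^ (1 - κ) :=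
        Real.div_rpow hν.le h1κ.le (1 - κ)
      have h4 : κ * (x / κ) + (1 - κ) * (ν / (1 - κ)) = x + ν := by
        field_simp
      rw [h2, h3, h4] at amgm
      -- amgm : x ^ κ / κ ^ κ * (ν ^ (1 - κ) / (1 - κ) ^ (1 - κ)) ≤ x + ν
      have hκκ : 0 < κ ^ κ := Real.rpow_pos_of_pos hκ _
      have h1κκ : 0 < (1 - κ) ^ (1 - κ) := Real.rpow_pos_of_pos h1κ _
      have hνκ : 0 < ν ^ κ := Real.rpow_pos_of_pos hν _
      have hν1κ : 0 < ν ^ (1 - κ) := Real.rpow_pos_of_pos hν _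
      have hxκ : 0 < x ^ κ := Real.rpow_pos_of_pos hx0 _
      have key : x ^ κ * ν ^ (1 - κ) ≤ (x + ν) * (κ ^ κ * (1 - κ) ^ (1 - κ)) := by
        rw [div_mul_div_comm] at amgm
        calc x ^ κ * ν ^ (1 - κ) = (x ^ κ * ν ^ (1 - κ) / (κ ^ κ * (1 - κ) ^ (1 - κ))) *
              (κ ^ κ * (1 - κ) ^ (1 - κ)) := by field_simp
          _ ≤ (x + ν) * (κ ^ κ * (1 - κ) ^ (1 - κ)) := by
              apply mul_le_mul_of_nonneg_right amgm (by positivity)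
      have hsplit : ν = ν ^ κ * ν ^ (1 - κ) := by
        rw [← Real.rpow_add hν]; norm_num
      rw [div_le_iff₀ hxν]
      calc ν * x ^ κ = ν ^ κ * (x ^ κ * ν ^ (1 - κ)) := by
            nth_rewrite 1 [hsplit]; ring
        _ ≤ ν ^ κ * ((x + ν) * (κ ^ κ * (1 - κ) ^ (1 - κ))) :=
            mul_le_mul_of_nonneg_left key hνκ.le
        _ = κ ^ κ * (1 - κ) ^ (1 - κ) * ν ^ κ * (x + ν) := by ring

/-- Let `ν > 0` and let `K` be a positive self-adjoint compact operator with
trivial kernel on a Hilbert space `H`, with `K + νI` invertible (inverse `B`). For `μ ∈ H`,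
define `μ̄_ν := (K + νI)⁻¹ K μ = B (K μ)`. Then `μ − μ̄_ν = ν (K + νI)⁻¹ μ`, hence
`‖μ − μ̄_ν‖ ≤ ‖μ‖`; moreover if `μ = K^κ δ` with `0 < κ ≤ 1` and `‖δ‖² ≤ M` then
`‖μ − μ̄_ν‖² ≤ M κ^{2κ}(1−κ)^{2(1−κ)} ν^{2κ}`. -/
theorem stmt14 {H : Type*} [NormedAddCommGroup H] [InnerProductSpace ℂ H] [CompleteSpace H]
    (K : H →L[ℂ] H) (hKc : IsCompactOperator K) (hKsa : IsSelfAdjoint K)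
    (hKpos : K.IsPositive) (hker : LinearMap.ker (K : H →ₗ[ℂ] H) = ⊥)
    (ν : ℝ) (hν : 0 < ν)
    (B : H →L[ℂ] H)
    (hB1 : (K + (ν : ℂ) • (1 : H →L[ℂ] H)) * B = 1)
    (hB2 : B * (K + (ν : ℂ) • (1 : H →L[ℂ] H)) = 1)
    (μ : H) :
    μ - B (K μ) = (ν : ℂ) • B μ ∧
    ‖μ - B (K μ)‖ ≤ ‖μ‖ ∧
    (∀ (κ M : ℝ) (δ : H), 0 < κ → κ ≤ 1 → ‖δ‖ ^ 2 ≤ M →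
      μ = cfc (fun x : ℝ => x ^ κ) K δ →
      ‖μ - B (K μ)‖ ^ 2 ≤ M * κ ^ (2 * κ) * (1 - κ) ^ (2 * (1 - κ)) * ν ^ (2 * κ)) := by
  -- identity part
  have hid : μ - B (K μ) = (ν : ℂ) • B μ := by
    have h := congrFun (congrArg DFunLike.coe hB2) μ
    simp only [ContinuousLinearMap.mul_apply, ContinuousLinearMap.add_apply,
      ContinuousLinearMap.smul_apply, ContinuousLinearMap.one_apply, map_add, map_smul] at h
    rw [sub_eq_iff_eq_add]
    exact h.symm.trans (add_comm _ _)
  -- norm bound on ν • B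
  have hBnorm : ∀ x : H, ν * ‖B x‖ ≤ ‖x‖ := by
    intro x
    have h := congrFun (congrArg DFunLike.coe hB1) x
    simp only [ContinuousLinearMap.mul_apply, ContinuousLinearMap.add_apply,
      ContinuousLinearMap.smul_apply, ContinuousLinearMap.one_apply] at h
    -- h : K (B x) + (ν:ℂ) • B x = x
    by_cases hz : B x = 0
    · simp [hz]
    have hpos := hKpos.2 (B x)
    have hcs : RCLike.re (⟪K (B x) + (ν : ℂ) • B x, B x⟫_ℂ) ≤ ‖x‖ * ‖B x‖ := by
      rw [h]; exact re_inner_le_norm _ _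
    have hre : RCLike.re (⟪K (B x) + (ν : ℂ) • B x, B x⟫_ℂ)
        = RCLike.re (⟪K (B x), B x⟫_ℂ) + ν * ‖B x‖ ^ 2 := by
      rw [inner_add_left, map_add]
      congr 1
      rw [inner_smul_left _ _ ((ν : ℂ)), Complex.conj_ofReal, inner_self_eq_norm_sq_to_K]
      simp [← Complex.ofReal_pow]
    have hBx : 0 < ‖B x‖ := norm_pos_iff.mpr hz
    have hpos' : 0 ≤ RCLike.re (⟪K (B x), B x⟫_ℂ) := by
      have := hKpos.2 (B x)
      simpa [ContinuousLinearMap.reApplyInnerSelf] using this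
    nlinarith
  refine ⟨hid, ?_, ?_⟩
  · rw [hid]
    calc ‖(ν : ℂ) • B μ‖ = ν * ‖B μ‖ := by
          rw [norm_smul, Complex.norm_real, Real.norm_of_nonneg hν.le]
      _ ≤ ‖μ‖ := hBnorm μ
  · intro κ M δ hκ hκ1 hδ hμ
    have hKnn : (0 : H →L[ℂ] H) ≤ K := (ContinuousLinearMap.nonneg_iff_isPositive K).mpr hKpos
    have hS : ∀ x ∈ spectrum ℝ K, (0 : ℝ) ≤ x := fun x hx =>
      spectrum_nonneg_of_nonneg hKnn hx
    set f : ℝ → ℝ := fun x => x ^ κ with hf_def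
    set g : ℝ → ℝ := fun x => ν * x ^ κ / (x + ν) with hg_def
    have hf : Continuous f := Real.continuous_rpow_const hκ.le
    have hg : ContinuousOn g (spectrum ℝ K) := by
      apply ContinuousOn.div
      · exact (continuous_const.mul hf).continuousOn
      · exact (continuous_id.add continuous_const).continuousOn
      · intro x hx; have := hS x hx; positivity
    -- key operator identity
    have hconst : cfc (fun _ : ℝ => ν) K = (ν : ℂ) • (1 : H →L[ℂ] H) := by
      rw [cfc_const ν K, Algebra.algebraMap_eq_smul_one, Complex.coe_smul]
    have step3 : cfc (fun x : ℝ => x + ν) K = K + (ν : ℂ) • 1 := by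
      rw [cfc_add K (fun x : ℝ => x) (fun _ => ν) continuous_id.continuousOn
        continuous_const.continuousOn, cfc_id' ℝ K, hconst]
    have step1 : cfc (fun x : ℝ => (x + ν) * g x) K = cfc (fun x => ν * f x) K := by
      apply cfc_congr
      intro x hx
      have hx0 := hS x hx
      have : x + ν ≠ 0 := by positivity
      simp only [hg_def, hf_def]
      field_simp
    have step2 : cfc (fun x : ℝ => (x + ν) * g x) K
        = cfc (fun x : ℝ => x + ν) K * cfc g K :=
      cfc_mul _ _ K ((continuous_id.add continuous_const).continuousOn) hg
    have step4 : cfc (fun x : ℝ => ν * f x) K = ν • cfc f K :=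
      cfc_const_mul ν f K hf.continuousOn
    have key : (K + (ν : ℂ) • 1) * cfc g K = ν • cfc f K := by
      rw [← step3, ← step2, step1, step4]
    have key2 : cfc g K = ν • (B * cfc f K) := by
      calc cfc g K = (B * (K + (ν : ℂ) • 1)) * cfc g K := by rw [hB2, one_mul]
        _ = B * ((K + (ν : ℂ) • 1) * cfc g K) := by rw [mul_assoc]
        _ = B * (ν • cfc f K) := by rw [key]
        _ = ν • (B * cfc f K) := mul_smul_comm ν B (cfc f K)
    have hν2 : (ν : ℂ) • B μ = (cfc g K) δ := by
      have := congrFun (congrArg DFunLike.coe key2) δ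
      simp only [ContinuousLinearMap.smul_apply, ContinuousLinearMap.mul_apply] at this
      rw [this, ← hμ, Complex.coe_smul]
    set C : ℝ := κ ^ κ * (1 - κ) ^ (1 - κ) * ν ^ κ with hC_def
    have hC : 0 ≤ C := by
      have h1κ : 0 ≤ 1 - κ := by linarith
      positivity
    have hCnorm : ‖cfc g K‖ ≤ C := by
      apply norm_cfc_le hC
      intro x hx
      have hx0 := hS x hx
      have hgx : 0 ≤ g x := by
        have hxν : 0 < x + ν := by linarith
        positivity
      rw [Real.norm_of_nonneg hgx]
      exact pointwise_bound hκ hκ1 hν hx0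
    have hnorm : ‖μ - B (K μ)‖ ≤ C * ‖δ‖ := by
      rw [hid, hν2]
      calc ‖(cfc g K) δ‖ ≤ ‖cfc g K‖ * ‖δ‖ := (cfc g K).le_opNorm δ
        _ ≤ C * ‖δ‖ := mul_le_mul_of_nonneg_right hCnorm (norm_nonneg δ)
    have hM : 0 ≤ M := le_trans (by positivity) hδ
    have hsq : ‖μ - B (K μ)‖ ^ 2 ≤ C ^ 2 * ‖δ‖ ^ 2 := by
      rw [← mul_pow]
      exact pow_le_pow_left₀ (norm_nonneg _) hnorm 2
    calc ‖μ - B (K μ)‖ ^ 2 ≤ C ^ 2 * ‖δ‖ ^ 2 := hsq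
      _ ≤ C ^ 2 * M := mul_le_mul_of_nonneg_left hδ (by positivity)
      _ = M * κ ^ (2 * κ) * (1 - κ) ^ (2 * (1 - κ)) * ν ^ (2 * κ) := by
          have h1κ : 0 ≤ 1 - κ := by linarith
          rw [hC_def]
          rw [show (2 : ℝ) * κ = κ * 2 by ring, show (2:ℝ) * (1 - κ) = (1-κ) * 2 by ring]
          rw [Real.rpow_mul hκ.le, Real.rpow_mul h1κ, Real.rpow_mul hν.le]
          rw [Real.rpow_two, Real.rpow_two, Real.rpow_two]
          ring
end

section
/- Let H be a Hilbert space with closed subspace V, and let L : H → ℝ be of the form L(f) = Q(P_V f) + ν‖f‖², where Q is any function of the orthogonal projection P_V f onto V, and ν > 0. Then any minimizer of L belongs to V, and if Q is convex the minimizer is unique. -/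
open scoped RealInnerProductSpace


/-- **abstract representer theorem.** Let `H` be a Hilbert space with a closed
subspace `V` (with orthogonal projection `P_V`), `ν > 0`, and
`L(f) = Q(P_V f) + ν ‖f‖²` for an arbitrary function `Q` of the projection. Then any minimizer
of `L` belongs to `V`, and if `Q` is convex the minimizer is unique. -/
theorem stmt19 {H : Type*} [NormedAddCommGroup H] [InnerProductSpace ℝ H] [CompleteSpace H]
    (V : Submodule ℝ H) [V.HasOrthogonalProjection]
    (Q : V → ℝ) (ν : ℝ) (hν : 0 < ν) :
    (∀ f : H,
      (∀ g : H, Q (V.orthogonalProjectionOnto f) + ν * ‖f‖ ^ 2 ≤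
        Q (V.orthogonalProjectionOnto g) + ν * ‖g‖ ^ 2) → f ∈ V) ∧
    (ConvexOn ℝ Set.univ Q → ∀ f₁ f₂ : H,
      (∀ g : H, Q (V.orthogonalProjectionOnto f₁) + ν * ‖f₁‖ ^ 2 ≤
        Q (V.orthogonalProjectionOnto g) + ν * ‖g‖ ^ 2) →
      (∀ g : H, Q (V.orthogonalProjectionOnto f₂) + ν * ‖f₂‖ ^ 2 ≤
        Q (V.orthogonalProjectionOnto g) + ν * ‖g‖ ^ 2) →
      f₁ = f₂) := by
  constructor
  · intro f hf
    set p : H := (V.orthogonalProjectionOnto f : H) with hp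
    have h1 := hf p
    rw [hp, Submodule.orthogonalProjectionOnto_mem_subspace_eq_self] at h1
    have hz : (inner ℝ (f - p) p : ℝ) = 0 :=
      V.starProjection_inner_eq_zero f p (V.orthogonalProjectionOnto f).2
    have hpyth : ‖f‖ ^ 2 = ‖f - p‖ ^ 2 + ‖p‖ ^ 2 := by
      have h := norm_add_sq_real (f - p) p
      rw [sub_add_cancel, hz] at h
      linarith
    have hle : ‖f - p‖ ^ 2 ≤ 0 := by nlinarith
    have : f - p = 0 := by
      have := norm_nonneg (f - p)
      have h0 : ‖f - p‖ = 0 := by nlinarith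
      exact norm_eq_zero.mp h0
    have hfp : f = p := sub_eq_zero.mp this
    rw [hfp]; exact (V.orthogonalProjectionOnto f).2
  · intro hQ f₁ f₂ h₁ h₂
    set m : H := (1/2 : ℝ) • f₁ + (1/2 : ℝ) • f₂ with hm
    have hPm : (V.orthogonalProjectionOnto m : V) =
        (1/2 : ℝ) • V.orthogonalProjectionOnto f₁ + (1/2 : ℝ) • V.orthogonalProjectionOnto f₂ := by
      rw [hm, map_add, map_smul, map_smul]
    have hconv := hQ.2 (Set.mem_univ (V.orthogonalProjectionOnto f₁))
      (Set.mem_univ (V.orthogonalProjectionOnto f₂)) (by norm_num : (0:ℝ) ≤ 1/2)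
      (by norm_num : (0:ℝ) ≤ 1/2) (by norm_num : (1/2 : ℝ) + 1/2 = 1)
    rw [← hPm] at hconv
    have hmn : ‖m‖ ^ 2 = (1/4) * ‖f₁‖ ^ 2 + (1/2) * (inner ℝ f₁ f₂ : ℝ) + (1/4) * ‖f₂‖ ^ 2 := by
      have h := norm_add_sq_real ((1/2 : ℝ) • f₁) ((1/2 : ℝ) • f₂)
      rw [norm_smul, norm_smul, real_inner_smul_left, real_inner_smul_right] at h
      rw [hm, h]
      simp [Real.norm_eq_abs]
      ring
    have hsub : ‖f₁ - f₂‖ ^ 2 = ‖f₁‖ ^ 2 - 2 * (inner ℝ f₁ f₂ : ℝ) + ‖f₂‖ ^ 2 := norm_sub_sq_real f₁ f₂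
    have hA := h₁ m
    have hB := h₂ m
    have hle : ‖f₁ - f₂‖ ^ 2 ≤ 0 := by
      simp only [smul_eq_mul] at hconv
      nlinarith
    have h0 : f₁ - f₂ = 0 := by
      have := norm_nonneg (f₁ - f₂)
      have : ‖f₁ - f₂‖ = 0 := by nlinarith
      exact norm_eq_zero.mp this
    exact sub_eq_zero.mp h0
end
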